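/- Let q be a prime power with q ≡ 1 (mod 3), F ∈ GF(q) the distinguished element, t₁ a root of t² + t + 1 = 0 in GF(q), and π(x) = ax + r an element of AGL(1,q) with π(F) ≠ F. Then π has exactly two neighbors in the contraction graph of AGL(1,q), namely σ₁(x) = a t₁ x + (a − t₁)F + r(1 + t₁) and σ₂(x) = (a/t₁) x + (a − 1/t₁)F + r(1 + 1/t₁). -/

import Mathlib

/-- The set of affine permutations `x ↦ a x + b`, `a ≠ 0`, of the field `K`. -/
def AGL (K : Type*) [Field K] : Set (Equiv.Perm K) :=
  {π | ∃ a b : K, a ≠ 0 ∧ ∀ x, π x = a * x + b}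

/-- Adjacency in the contraction graph of `AGL(1,q)` with distinguished element `F`. -/
def AGLAdj {K : Type*} [Field K] (F : K) (π σ : Equiv.Perm K) : Prop :=
  π ∈ AGL K ∧ σ ∈ AGL K ∧ π F ≠ F ∧ σ F ≠ F ∧
    σ (π⁻¹ F) = π F ∧ π (σ⁻¹ F) = σ F

/-- The affine permutation `x ↦ a x + b`. -/
def affPerm {K : Type*} [Field K] (a b : K) (ha : a ≠ 0) : Equiv.Perm K :=
  (Equiv.mulLeft₀ a ha).trans (Equiv.addRight b)

lemma affPerm_apply {K : Type*} [Field K] (a b : K) (ha : a ≠ 0) (x : K) :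
    affPerm a b ha x = a * x + b := rfl

lemma inv_apply_of_affine {K : Type*} [Field K] (σ : Equiv.Perm K) (b c : K)
    (hb : b ≠ 0) (hσ : ∀ x, σ x = b * x + c) (F : K) : σ⁻¹ F = (F - c) / b := by
  have h : σ ((F - c) / b) = F := by rw [hσ]; field_simp; ring
  conv_lhs => rw [← h]
  exact σ.symm_apply_apply _

theorem stmt6 {K : Type*} [Field K] [Fintype K] (q : ℕ) (hq : Fintype.card K = q)
    (hq3 : q % 3 = 1) (F : K) (t₁ : K) (ht₁ : t₁ ^ 2 + t₁ + 1 = 0)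
    (π : Equiv.Perm K) (a r : K) (ha : a ≠ 0) (hπ : ∀ x, π x = a * x + r)
    (hπF : π F ≠ F) :
    ∃ σ₁ σ₂ : Equiv.Perm K,
      (∀ x, σ₁ x = a * t₁ * x + (a - t₁) * F + r * (1 + t₁)) ∧
      (∀ x, σ₂ x = a / t₁ * x + (a - 1 / t₁) * F + r * (1 + 1 / t₁)) ∧
      σ₁ ≠ σ₂ ∧ AGLAdj F π σ₁ ∧ AGLAdj F π σ₂ ∧
      ∀ σ : Equiv.Perm K, AGLAdj F π σ → σ = σ₁ ∨ σ = σ₂ := by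
  have ht0 : t₁ ≠ 0 := by intro h; rw [h] at ht₁; simp at ht₁
  have h3 : (3 : K) ≠ 0 := by
    intro h
    have inst : CharP K (ringChar K) := ringChar.charP K
    have hd : ringChar K ∣ 3 := (CharP.cast_eq_zero_iff K (ringChar K) 3).mp (by exact_mod_cast h)
    obtain ⟨n, hp, hcard⟩ := FiniteField.card K (ringChar K)
    have h33 : ringChar K = 3 := (Nat.prime_dvd_prime_iff_eq hp Nat.prime_three).mp hd
    rw [h33, hq] at hcard
    have : 3 ∣ q := hcard ▸ dvd_pow_self 3 n.ne_zero
    omega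
  have ht1' : 1 + t₁ ≠ 0 := by
    intro h
    have : t₁ = -1 := by linear_combination h
    rw [this] at ht₁; norm_num at ht₁
  have hne : t₁ ≠ 1 / t₁ := by
    intro h
    have h2 : t₁ * t₁ = 1 := by field_simp at h; linear_combination h
    have ht2 : t₁ = -2 := by linear_combination ht₁ - h2
    exact h3 (by linear_combination h2 - (t₁ - 2) * ht2)
  have hFd : a * F + r - F ≠ 0 := by
    intro h; apply hπF; rw [hπ]; linear_combination h
  set c₁ : K := (a - t₁) * F + r * (1 + t₁) with hc₁
  set c₂ : K := (a - 1 / t₁) * F + r * (1 + 1 / t₁) with hc₂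
  have hb1 : a * t₁ ≠ 0 := mul_ne_zero ha ht0
  have hb2 : a / t₁ ≠ 0 := div_ne_zero ha ht0
  refine ⟨affPerm (a * t₁) c₁ hb1, affPerm (a / t₁) c₂ hb2, ?_, ?_, ?_, ?_, ?_, ?_⟩
  · intro x; rw [affPerm_apply]; ring
  · intro x; rw [affPerm_apply]; ring
  · intro h
    have h0 : affPerm (a * t₁) c₁ hb1 0 = affPerm (a / t₁) c₂ hb2 0 := by rw [h]
    have h1 : affPerm (a * t₁) c₁ hb1 1 = affPerm (a / t₁) c₂ hb2 1 := by rw [h]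
    rw [affPerm_apply, affPerm_apply] at h0 h1
    exact hne (mul_left_cancel₀ ha (show a * t₁ = a * (1 / t₁) by linear_combination h1 - h0))
  · refine ⟨⟨a, r, ha, hπ⟩, ⟨a * t₁, c₁, hb1, fun x => rfl⟩, hπF, ?_, ?_, ?_⟩
    · rw [affPerm_apply]
      intro h
      have key : (1 + t₁) * (a * F + r - F) = 0 := by linear_combination h
      rcases mul_eq_zero.mp key with h' | h'
      exacts [ht1' h', hFd h']
    · rw [inv_apply_of_affine π a r ha hπ, affPerm_apply, hπ]
      field_simp; ring
    · rw [inv_apply_of_affine _ (a * t₁) c₁ hb1 (fun x => rfl), hπ, affPerm_apply]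
      field_simp
      linear_combination (F - F * a - r) * ht₁
  · refine ⟨⟨a, r, ha, hπ⟩, ⟨a / t₁, c₂, hb2, fun x => rfl⟩, hπF, ?_, ?_, ?_⟩
    · rw [affPerm_apply]
      intro h
      field_simp at h
      have key : (1 + t₁) * (a * F + r - F) = 0 := by
        linear_combination h + (F - r) * mul_inv_cancel₀ ht0
      rcases mul_eq_zero.mp key with h' | h'
      exacts [ht1' h', hFd h']
    · rw [inv_apply_of_affine π a r ha hπ, affPerm_apply, hπ]
      field_simp
      linear_combination (r - F) * mul_inv_cancel₀ ht0
    · rw [inv_apply_of_affine _ (a / t₁) c₂ hb2 (fun x => rfl), hπ, affPerm_apply]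
      field_simp
      linear_combination ((a * F - r - F) * a * t₁ + (F - r) + F * a * (t₁ - 1) - F * a ^ 2 * t₁ + a * t₁ * r) * ht₁ + (F - r) * (1 + t₁) * mul_inv_cancel₀ ht0
  · rintro σ ⟨-, ⟨b, c, hb, hσ⟩, -, hσF, h1, h2⟩
    rw [inv_apply_of_affine π a r ha hπ, hσ, hπ] at h1
    rw [inv_apply_of_affine σ b c hb hσ, hπ, hσ] at h2
    have E3 : b * (F - r) + c * a = (a * F + r) * a := by
      field_simp at h1; linear_combination h1
    have E4 : a * (F - c) + r * b = (b * F + c) * b := by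
      field_simp at h2; linear_combination h2
    have key : (a ^ 2 + a * b + b ^ 2) * ((a - 1) * F + r) = 0 := by
      linear_combination (-a) * E4 + (-(a + b)) * E3
    have hab : a ^ 2 + a * b + b ^ 2 = 0 := by
      rcases mul_eq_zero.mp key with h' | h'
      · exact h'
      · exact absurd (by linear_combination h') hFd
    have hfac : (b - a * t₁) * (b - a * (1 / t₁)) = 0 := by
      field_simp
      linear_combination t₁ * hab - a * b * ht₁
    rcases mul_eq_zero.mp hfac with hB | hB
    · left
      have hbb : b = a * t₁ := by linear_combination hB
      have hc : c = c₁ := mul_right_cancel₀ ha (by linear_combination E3 - (F - r) * hbb)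
      apply Equiv.ext; intro x
      rw [hσ x, affPerm_apply, hbb, hc]
    · right
      have hbb : b = a / t₁ := by field_simp at hB ⊢; linear_combination hB
      have hc : c = c₂ := mul_right_cancel₀ ha (by linear_combination E3 - (F - r) * hbb)
      apply Equiv.ext; intro x
      rw [hσ x, affPerm_apply, hbb, hc]
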